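/- Every simple connected graph G of minimum degree at least 2 that is not a friendship graph has an edge e such that G − e or the simplified contraction G/e is again a simple connected graph of minimum degree at least 2. -/

import Mathlib

open SimpleGraph

/-- Subdivide the edge `uv` of `G`: the new vertex is `none`. -/
def SubdivideEdge {V : Type} (G : SimpleGraph V) (u v : V) : SimpleGraph (Option V) :=
  SimpleGraph.fromRel (fun a b =>
    (∃ x y : V, a = some x ∧ b = some y ∧ G.Adj x y ∧ s(x, y) ≠ s(u, v)) ∨
    (a = none ∧ (b = some u ∨ b = some v)))

/-- `IsSubdivisionOf G H` : `G` is isomorphic to a graph obtained from `H` by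
repeatedly subdividing edges. -/
inductive IsSubdivisionOf : {V W : Type} → SimpleGraph V → SimpleGraph W → Prop
  | base {V W : Type} {G : SimpleGraph V} {H : SimpleGraph W} (e : G ≃g H) :
      IsSubdivisionOf G H
  | subdiv {V W U : Type} {G : SimpleGraph V} {H : SimpleGraph W} {S : SimpleGraph U}
      {u v : U} (h : S.Adj u v) (hS : IsSubdivisionOf S H)
      (e : G ≃g SubdivideEdge S u v) : IsSubdivisionOf G H

def K4 : SimpleGraph (Fin 4) := ⊤

def K5 : SimpleGraph (Fin 5) := ⊤

/-- `K_4` minus one edge. -/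
def K4minus : SimpleGraph (Fin 4) := K4.deleteEdges {s((0 : Fin 4), (1 : Fin 4))}

/-- The wheel with `n` rim vertices; the hub is `none`. -/
def Wheel (n : ℕ) : SimpleGraph (Option (Fin n)) :=
  SimpleGraph.fromRel (fun a b =>
    a = none ∨ ∃ i j : Fin n, a = some i ∧ b = some j ∧ (i.val + 1) % n = j.val)

/-- The prism `K_2 × K_3`. -/
def Prism : SimpleGraph (Fin 2 × Fin 3) :=
  SimpleGraph.boxProd (⊤ : SimpleGraph (Fin 2)) (⊤ : SimpleGraph (Fin 3))

def K33 : SimpleGraph (Fin 3 ⊕ Fin 3) := completeBipartiteGraph (Fin 3) (Fin 3)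

/-- `H` is isomorphic to a subdivision of a wheel, the prism, or `K_{3,3}`. -/
def IsWPKSubdivision {V : Type} (H : SimpleGraph V) : Prop :=
  (∃ n, 3 ≤ n ∧ IsSubdivisionOf H (Wheel n)) ∨
    IsSubdivisionOf H Prism ∨ IsSubdivisionOf H K33

/-- The square of a cycle of length `n`. -/
def cycleSq (n : ℕ) : SimpleGraph (Fin n) :=
  SimpleGraph.fromRel (fun a b => (a.val + 1) % n = b.val ∨ (a.val + 2) % n = b.val)

/-- The cycle of length `n`. -/
def cycleG (n : ℕ) : SimpleGraph (Fin n) :=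
  SimpleGraph.fromRel (fun a b => (a.val + 1) % n = b.val)

/-- Membership in the class 𝒞 of (simple) connected graphs of minimum degree at least 4. -/
def InC {V : Type} (G : SimpleGraph V) : Prop :=
  G.Connected ∧ ∀ v : V, 4 ≤ (G.neighborSet v).ncard

/-- Contract the edge `xy` of `G` to the vertex `x` and simplify. -/
def contractEdge {V : Type} (G : SimpleGraph V) (x y : V) :
    SimpleGraph {z : V // z ≠ y} :=
  SimpleGraph.fromRel (fun a b =>
    G.Adj a.val b.val ∨ (a.val = x ∧ G.Adj y b.val) ∨ (b.val = x ∧ G.Adj a.val y))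

/-- `G` is 4-connected: at least 5 vertices and deleting any at most 3 vertices
leaves a connected graph. -/
def FourConnected {V : Type} [Fintype V] (G : SimpleGraph V) : Prop :=
  5 ≤ Fintype.card V ∧
    ∀ s : Finset V, s.card ≤ 3 → (G.induce ((↑s : Set V)ᶜ)).Connected

/-- `G` is 3-connected: at least 4 vertices and deleting any at most 2 vertices
leaves a connected graph. -/
def ThreeConnected {V : Type} [Fintype V] (G : SimpleGraph V) : Prop :=
  4 ≤ Fintype.card V ∧
    ∀ s : Finset V, s.card ≤ 2 → (G.induce ((↑s : Set V)ᶜ)).Connected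

/-- Planarity, encoded via Kuratowski's characterization: no subgraph is a
subdivision of `K_5` or `K_{3,3}`. -/
def KuratowskiPlanar {V : Type} (G : SimpleGraph V) : Prop :=
  ¬ ∃ H : G.Subgraph, IsSubdivisionOf H.coe K5 ∨ IsSubdivisionOf H.coe K33

/-- The friendship graph made of `n` triangles glued at the hub `none`. -/
def FriendshipGraph (n : ℕ) : SimpleGraph (Option (Fin n × Fin 2)) :=
  SimpleGraph.fromRel (fun a b =>
    a = none ∨ ∃ (i : Fin n) (p q : Fin 2), a = some (i, p) ∧ b = some (i, q))

def IsFriendship {V : Type} (G : SimpleGraph V) : Prop :=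
  ∃ n : ℕ, 1 ≤ n ∧ Nonempty (G ≃g FriendshipGraph n)

/-- Membership in the class of (simple) connected graphs of minimum degree at least 2. -/
def InC2 {V : Type} (G : SimpleGraph V) : Prop :=
  G.Connected ∧ ∀ v : V, 2 ≤ (G.neighborSet v).ncard

section AuxStmt14

variable {V : Type} [Fintype V] {G : SimpleGraph V}

lemma contract_adj_iff {x y : V} {p q : {z : V // z ≠ y}} :
    (contractEdge G x y).Adj p q ↔ p ≠ q ∧
      (G.Adj p.val q.val ∨ (p.val = x ∧ G.Adj y q.val) ∨ (q.val = x ∧ G.Adj p.val y)) := by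
  simp only [contractEdge, SimpleGraph.fromRel_adj]
  constructor
  · rintro ⟨hne, h | h⟩
    · exact ⟨hne, h⟩
    · refine ⟨hne, ?_⟩
      rcases h with h | ⟨h1, h2⟩ | ⟨h1, h2⟩
      · exact Or.inl h.symm
      · exact Or.inr (Or.inr ⟨h1, h2.symm⟩)
      · exact Or.inr (Or.inl ⟨h1, h2.symm⟩)
  · rintro ⟨hne, h⟩
    exact ⟨hne, Or.inl h⟩

/-- the canonical map from `V` to the vertex set of the contraction -/
noncomputable def cmap (x y : V) (hxy : x ≠ y) (v : V) : {z : V // z ≠ y} := by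
  classical exact if h : v = y then ⟨x, hxy⟩ else ⟨v, h⟩

lemma cmap_ne {x y : V} (hxy : x ≠ y) {v : V} (h : v ≠ y) : cmap x y hxy v = ⟨v, h⟩ := by
  simp [cmap, h]

lemma cmap_eq {x y : V} (hxy : x ≠ y) : cmap x y hxy y = ⟨x, hxy⟩ := by
  simp [cmap]

lemma cmap_step {x y : V} (hxy : G.Adj x y) {u v : V} (h : G.Adj u v) :
    cmap x y hxy.ne u = cmap x y hxy.ne v ∨
      (contractEdge G x y).Adj (cmap x y hxy.ne u) (cmap x y hxy.ne v) := by
  by_cases hu : u = y <;> by_cases hv : v = y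
  · exact absurd (hu ▸ hv ▸ h) (G.irrefl)
  · subst hu
    rw [cmap_eq, cmap_ne _ hv]
    by_cases hvx : v = x
    · exact Or.inl (by simp [hvx])
    · refine Or.inr (contract_adj_iff.2 ⟨?_, Or.inr (Or.inl ⟨rfl, h⟩)⟩)
      simp [Subtype.ext_iff, Ne.symm hvx]
  · subst hv
    rw [cmap_eq, cmap_ne _ hu]
    by_cases hux : u = x
    · exact Or.inl (by simp [hux])
    · refine Or.inr (contract_adj_iff.2 ⟨?_, Or.inr (Or.inr ⟨rfl, h⟩)⟩)
      simp [Subtype.ext_iff, hux]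
  · rw [cmap_ne _ hu, cmap_ne _ hv]
    refine Or.inr (contract_adj_iff.2 ⟨?_, Or.inl h⟩)
    simp [Subtype.ext_iff, h.ne]

lemma cmap_reachable {x y : V} (hxy : G.Adj x y) {u v : V} (w : G.Walk u v) :
    (contractEdge G x y).Reachable (cmap x y hxy.ne u) (cmap x y hxy.ne v) := by
  induction w with
  | nil => exact SimpleGraph.Reachable.refl _
  | cons h _ ih =>
      rcases cmap_step hxy h with he | ha
      · exact he ▸ ih
      · exact (ha.reachable).trans ih

lemma contract_connected {x y : V} (hxy : G.Adj x y) (hc : G.Connected) :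
    (contractEdge G x y).Connected := by
  rw [SimpleGraph.connected_iff]
  refine ⟨fun p q => ?_, ⟨⟨x, hxy.ne⟩⟩⟩
  obtain ⟨w⟩ := hc.preconnected p.val q.val
  have := cmap_reachable hxy w
  rwa [cmap_ne _ p.prop, cmap_ne _ q.prop, Subtype.coe_eta, Subtype.coe_eta] at this

lemma contract_fail {a b : V} (hab : G.Adj a b) (hG : InC2 G)
    (hfail : ¬ InC2 (contractEdge G a b)) :
    (∃ z, G.neighborSet z = {a, b}) ∨
    (∃ z, G.neighborSet a = {b, z} ∧ G.neighborSet b = {a, z}) := by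
  have hconn := contract_connected hab hG.1
  have hdeg : ∃ w : {z : V // z ≠ b}, ((contractEdge G a b).neighborSet w).ncard < 2 := by
    by_contra h
    push_neg at h
    exact hfail ⟨hconn, fun w => h w⟩
  obtain ⟨w, hw⟩ := hdeg
  have key : ∀ p q : {z : V // z ≠ b}, p ≠ q →
      (contractEdge G a b).Adj w p → (contractEdge G a b).Adj w q → False := by
    intro p q hpq hp hq
    have hsub : ({p, q} : Set _) ⊆ (contractEdge G a b).neighborSet w := by
      rintro r (rfl | rfl)
      · exact hp
      · exact hq
    have h2 := Set.ncard_le_ncard hsub (Set.toFinite _)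
    rw [Set.ncard_pair hpq] at h2
    omega
  by_cases hwa : w.val = a
  · right
    have h2a := hG.2 a
    have h2b := hG.2 b
    obtain ⟨z, hz, hzb⟩ := Set.exists_ne_of_one_lt_ncard
      (by omega : 1 < (G.neighborSet a).ncard) b
    rw [SimpleGraph.mem_neighborSet] at hz
    have hza : z ≠ a := hz.ne'
    have huniq : ∀ u, u ≠ a → u ≠ b → (G.Adj a u ∨ G.Adj b u) → u = z := by
      intro u hua hub hu
      by_contra huz
      refine key ⟨u, hub⟩ ⟨z, hzb⟩ (by simp [Subtype.ext_iff, huz]) ?_ ?_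
      · refine contract_adj_iff.2 ⟨by simp [Subtype.ext_iff, hwa, Ne.symm hua], ?_⟩
        rcases hu with h | h
        · exact Or.inl (by rw [hwa]; exact h)
        · exact Or.inr (Or.inl ⟨hwa, h⟩)
      · exact contract_adj_iff.2
          ⟨by simp [Subtype.ext_iff, hwa, Ne.symm hza], Or.inl (by rw [hwa]; exact hz)⟩
    refine ⟨z, ?_, ?_⟩
    · refine Set.eq_of_subset_of_ncard_le ?_ ?_ (Set.toFinite _)
      · intro u hu
        rw [SimpleGraph.mem_neighborSet] at hu
        by_cases hub : u = b
        · exact Or.inl hub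
        · exact Or.inr (huniq u hu.ne' hub (Or.inl hu))
      · rw [Set.ncard_pair (Ne.symm hzb)]; exact h2a
    · refine Set.eq_of_subset_of_ncard_le ?_ ?_ (Set.toFinite _)
      · intro u hu
        rw [SimpleGraph.mem_neighborSet] at hu
        by_cases hua : u = a
        · exact Or.inl hua
        · exact Or.inr (huniq u hua hu.ne' (Or.inr hu))
      · rw [Set.ncard_pair (Ne.symm hza)]; exact h2b
  · left
    refine ⟨w.val, Set.eq_of_subset_of_ncard_le ?_ ?_ (Set.toFinite _)⟩
    · intro u hu
      rw [SimpleGraph.mem_neighborSet] at hu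
      by_contra hu2
      simp only [Set.mem_insert_iff, Set.mem_singleton_iff, not_or] at hu2
      obtain ⟨hua, hub⟩ := hu2
      obtain ⟨u', hu', hu'u⟩ := Set.exists_ne_of_one_lt_ncard
        (by have := hG.2 w.val; omega : 1 < (G.neighborSet w.val).ncard) u
      rw [SimpleGraph.mem_neighborSet] at hu'
      classical
      refine key ⟨u, hub⟩ (if h : u' = b then ⟨a, hab.ne⟩ else ⟨u', h⟩) ?_ ?_ ?_
      · by_cases h : u' = b <;> simp [h, Subtype.ext_iff, hua, Ne.symm hu'u]
      · exact contract_adj_iff.2 ⟨by simp [Subtype.ext_iff, hu.ne], Or.inl hu⟩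
      · by_cases h : u' = b
        · simp only [h, dif_pos]
          exact contract_adj_iff.2
            ⟨by simp [Subtype.ext_iff, hwa], Or.inr (Or.inr ⟨rfl, h ▸ hu'⟩)⟩
        · simp only [h, dif_neg, not_false_iff]
          exact contract_adj_iff.2 ⟨by simp [Subtype.ext_iff, hu'.ne], Or.inl hu'⟩
    · rw [Set.ncard_pair hab.ne]; exact hG.2 w.val

lemma hub_exists (hG : InC2 G)
    (P : ∀ a b, G.Adj a b → (∃ z, G.neighborSet z = {a, b}) ∨
      (∃ z, G.neighborSet a = {b, z} ∧ G.neighborSet b = {a, z})) :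
    ∃ c p q, p ≠ q ∧ G.neighborSet p = {c, q} ∧ G.neighborSet q = {c, p} := by
  have : Nonempty V := hG.1.nonempty
  obtain ⟨x⟩ := this
  obtain ⟨y, hy⟩ : (G.neighborSet x).Nonempty := by
    apply Set.nonempty_of_ncard_ne_zero
    have := hG.2 x; omega
  rw [SimpleGraph.mem_neighborSet] at hy
  rcases P x y hy with ⟨z, hz⟩ | ⟨z, h1, h2⟩
  · have hzx : G.Adj z x := by
      rw [← SimpleGraph.mem_neighborSet, hz]; exact Or.inl rfl
    rcases P z x hzx with ⟨w, hw⟩ | ⟨w, hw1, hw2⟩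
    · have hwz : G.Adj w z := by
        rw [← SimpleGraph.mem_neighborSet, hw]; exact Or.inl rfl
      have hwx : G.Adj w x := by
        rw [← SimpleGraph.mem_neighborSet, hw]; exact Or.inr rfl
      have hwmem : w ∈ G.neighborSet z := hwz.symm
      rw [hz] at hwmem
      rcases hwmem with rfl | rfl
      · exact absurd hwx (G.irrefl)
      · have hzy : G.Adj z w := by
          rw [← SimpleGraph.mem_neighborSet, hz]; exact Or.inr rfl
        exact ⟨x, z, w, hzy.ne, hz, by rw [hw, Set.pair_comm]⟩
    · have : y ∈ G.neighborSet z := by rw [hz]; exact Or.inr rfl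
      rw [hw1] at this
      rcases this with rfl | rfl
      · exact absurd hy (G.irrefl)
      · exact ⟨y, x, z, hzx.ne', by rw [hw2, Set.pair_comm], by rw [hz, Set.pair_comm]⟩
  · exact ⟨z, x, y, hy.ne, by rw [h1, Set.pair_comm], by rw [h2, Set.pair_comm]⟩

lemma hub_all (hG : InC2 G)
    (P : ∀ a b, G.Adj a b → (∃ z, G.neighborSet z = {a, b}) ∨
      (∃ z, G.neighborSet a = {b, z} ∧ G.neighborSet b = {a, z}))
    {c p q : V} (hpq : p ≠ q) (hp : G.neighborSet p = {c, q}) (hq : G.neighborSet q = {c, p}) :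
    ∀ u, G.Adj c u → ∃ w, G.neighborSet u = {c, w} ∧ G.neighborSet w = {c, u} := by
  have hpc : G.Adj p c := by rw [← SimpleGraph.mem_neighborSet, hp]; exact Or.inl rfl
  have hqc : G.Adj q c := by rw [← SimpleGraph.mem_neighborSet, hq]; exact Or.inl rfl
  intro u hu
  by_cases hup : u = p
  · exact ⟨q, hup ▸ hp, hup ▸ hq⟩
  by_cases huq : u = q
  · exact ⟨p, huq ▸ hq, huq ▸ hp⟩
  rcases P c u hu with ⟨w, hw⟩ | ⟨t, ht1, ht2⟩
  · -- apex w for edge cu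
    have hwu : G.Adj w u := by rw [← SimpleGraph.mem_neighborSet, hw]; exact Or.inr rfl
    rcases P u w hwu.symm with ⟨t, htw⟩ | ⟨t, ht1, ht2⟩
    · exfalso
      have htw' : G.Adj t w := by rw [← SimpleGraph.mem_neighborSet, htw]; exact Or.inr rfl
      have htu : G.Adj t u := by rw [← SimpleGraph.mem_neighborSet, htw]; exact Or.inl rfl
      have : t ∈ G.neighborSet w := htw'.symm
      rw [hw] at this
      rcases this with h | h
      · -- t = c, so N c = {u, w}
        have hNc : G.neighborSet c = {u, w} := h ▸ htw
        have hpmem : p ∈ G.neighborSet c := hpc.symm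
        rw [hNc] at hpmem
        rcases hpmem with h2 | h2
        · exact hup h2.symm
        · -- p = w, so {c,q} = {c,u}
          rw [← h2, hp] at hw
          have : q ∈ ({c, u} : Set V) := by rw [← hw]; exact Or.inr rfl
          rcases this with h3 | h3
          · exact G.irrefl (h3 ▸ hqc)
          · exact huq h3.symm
      · exact G.irrefl (h ▸ htu)
    · -- pair t for edge uw : N u = {w,t}, N w = {u,t}
      have : c ∈ G.neighborSet w := by rw [hw]; exact Or.inl rfl
      rw [ht2] at this
      rcases this with rfl | rfl
      · exact absurd hu (G.irrefl)
      · exact ⟨w, by rw [ht1, Set.pair_comm], hw⟩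
  · -- pair t for edge cu : N c = {u,t}
    exfalso
    have hpmem : p ∈ G.neighborSet c := hpc.symm
    have hqmem : q ∈ G.neighborSet c := hqc.symm
    rw [ht1] at hpmem hqmem
    rcases hpmem with rfl | rfl
    · exact hup rfl
    · rcases hqmem with rfl | rfl
      · exact huq rfl
      · exact hpq rfl

lemma hub_adj_all (hG : InC2 G)
    {c : V} (hall : ∀ u, G.Adj c u → ∃ w, G.neighborSet u = {c, w} ∧ G.neighborSet w = {c, u}) :
    ∀ v, v = c ∨ G.Adj c v := by
  have closure : ∀ ⦃s t : V⦄, G.Adj s t → (s = c ∨ G.Adj c s) → (t = c ∨ G.Adj c t) := by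
    rintro s t hst (rfl | hs)
    · exact Or.inr hst
    · obtain ⟨w, hN, hNw⟩ := hall s hs
      have : t ∈ G.neighborSet s := hst
      rw [hN] at this
      rcases this with rfl | rfl
      · exact Or.inl rfl
      · right
        have : c ∈ G.neighborSet t := by rw [hNw]; exact Or.inl rfl
        exact this.symm
  have main : ∀ (u v : V), G.Walk u v → (u = c ∨ G.Adj c u) → (v = c ∨ G.Adj c v) := by
    intro u v wk
    induction wk with
    | nil => exact id
    | cons h _ ih => exact fun hs => ih (closure h hs)
  intro v
  obtain ⟨wk⟩ := hG.1.preconnected c v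
  exact main c v wk (Or.inl rfl)

lemma friendship_of_hub (hG : InC2 G) (c : V) (hne : ∃ v : V, v ≠ c)
    (hm : ∀ v : V, v ≠ c → ∃ w, w ≠ c ∧ w ≠ v ∧
      G.neighborSet v = {c, w} ∧ G.neighborSet w = {c, v}) :
    IsFriendship G := by
  classical
  have pair_unique : ∀ (v w w' : V), w ≠ c → w' ≠ c → G.neighborSet v = {c, w} →
      G.neighborSet v = {c, w'} → w = w' := by
    intro v w w' hw _ h1 h2
    have : w ∈ ({c, w'} : Set V) := by rw [← h2, h1]; exact Or.inr rfl
    rcases this with h | h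
    · exact absurd h hw
    · exact h
  let m : {v : V // v ≠ c} → {v : V // v ≠ c} :=
    fun v => ⟨(hm v.val v.prop).choose, (hm v.val v.prop).choose_spec.1⟩
  have hm1 : ∀ v, G.neighborSet v.val = {c, (m v).val} :=
    fun v => (hm v.val v.prop).choose_spec.2.2.1
  have hm2 : ∀ v, G.neighborSet (m v).val = {c, v.val} :=
    fun v => (hm v.val v.prop).choose_spec.2.2.2
  have hmne : ∀ v, m v ≠ v := by
    intro v h
    exact (hm v.val v.prop).choose_spec.2.1 (congrArg Subtype.val h)
  have hminv : ∀ v, m (m v) = v := by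
    intro v
    exact Subtype.ext
      (pair_unique (m v).val _ _ (m (m v)).prop v.prop (hm1 (m v)) (hm2 v))
  letI sQ : Setoid {v : V // v ≠ c} := ⟨fun v w => w = v ∨ w = m v, by
    constructor
    · exact fun v => Or.inl rfl
    · rintro v w (rfl | rfl)
      · exact Or.inl rfl
      · exact Or.inr (hminv v).symm
    · rintro v w t (rfl | rfl) h
      · exact h
      · rcases h with rfl | rfl
        · exact Or.inr rfl
        · exact Or.inl (hminv v)⟩
  set n := Fintype.card (Quotient sQ) with hndef
  have hn : 1 ≤ n := by
    obtain ⟨v, hv⟩ := hne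
    exact Fintype.card_pos_iff.2 ⟨⟦⟨v, hv⟩⟧⟩
  let eQ : Quotient sQ ≃ Fin n := Fintype.equivFin (Quotient sQ)
  have hqm : ∀ v, (⟦m v⟧ : Quotient sQ) = ⟦v⟧ :=
    fun v => Quotient.sound (Or.inr (hminv v).symm)
  have hout : ∀ v : {v : V // v ≠ c}, v = (⟦v⟧ : Quotient sQ).out ∨
      v = m ((⟦v⟧ : Quotient sQ).out) := fun v => Quotient.mk_out v
  let f : {v : V // v ≠ c} → Fin n × Fin 2 :=
    fun v => (eQ ⟦v⟧, if v = (⟦v⟧ : Quotient sQ).out then 0 else 1)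
  let g : Fin n × Fin 2 → {v : V // v ≠ c} :=
    fun x => if x.2 = 0 then (eQ.symm x.1).out else m ((eQ.symm x.1).out)
  have gf : ∀ v, g (f v) = v := by
    intro v
    by_cases h : v = (⟦v⟧ : Quotient sQ).out
    · simp only [f, g, if_pos h, if_pos rfl, Equiv.symm_apply_apply]
      exact h.symm
    · simp only [f, g, if_neg h]
      rw [if_neg (by decide : ¬(1 : Fin 2) = 0), Equiv.symm_apply_apply]
      rcases hout v with h2 | h2
      · exact absurd h2 h
      · exact h2.symm
  have fg : ∀ x, f (g x) = x := by
    rintro ⟨i, p⟩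
    fin_cases p
    · show f (g (i, 0)) = (i, 0)
      simp only [g, if_pos rfl]
      have h1 : (⟦(eQ.symm i).out⟧ : Quotient sQ) = eQ.symm i := Quotient.out_eq _
      simp only [f, h1, Equiv.apply_symm_apply, if_pos rfl]
      simp
    · show f (g (i, 1)) = (i, 1)
      simp only [g, if_neg (by decide : ¬(1 : Fin 2) = 0)]
      have h1 : (⟦m ((eQ.symm i).out)⟧ : Quotient sQ) = eQ.symm i := by
        rw [hqm]; exact Quotient.out_eq _
      have h2 : m ((eQ.symm i).out) ≠ (⟦m ((eQ.symm i).out)⟧ : Quotient sQ).out := by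
        rw [h1]
        exact fun h => hmne _ h
      simp only [f, h1, Equiv.apply_symm_apply, if_neg h2]
      rw [if_neg (fun h => hmne _ h)]
  have fadj : ∀ v w, (w = m v) ↔ ((f v).1 = (f w).1 ∧ v ≠ w) := by
    intro v w
    constructor
    · rintro rfl
      refine ⟨?_, fun h => hmne v h.symm⟩
      show eQ ⟦v⟧ = eQ ⟦m v⟧
      rw [hqm]
    · rintro ⟨h1, h2⟩
      have : (⟦v⟧ : Quotient sQ) = ⟦w⟧ := eQ.injective h1
      rcases Quotient.exact this with h | h
      · exact absurd h.symm h2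
      · exact h
  let E : V ≃ Option (Fin n × Fin 2) :=
    { toFun := fun v => if h : v = c then none else some (f ⟨v, h⟩)
      invFun := fun o => Option.elim o c (fun x => (g x).val)
      left_inv := by
        intro v
        by_cases h : v = c
        · simp [h]
        · simp only [dif_neg h, Option.elim]
          rw [gf]
      right_inv := by
        rintro (_ | x)
        · simp
        · simp only [Option.elim]
          show (if h : (g x).val = c then none else some (f ⟨(g x).val, h⟩)) = some x
          rw [dif_neg (g x).prop]
          congr 1
          rw [Subtype.coe_eta, fg] }
  have Gadj : ∀ (a b : V) (ha : a ≠ c) (hb : b ≠ c),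
      (G.Adj a b ↔ (⟨b, hb⟩ : {v : V // v ≠ c}) = m ⟨a, ha⟩) := by
    intro a b ha hb
    constructor
    · intro h
      have h2 : b ∈ G.neighborSet a := h
      rw [hm1 ⟨a, ha⟩] at h2
      rcases h2 with h2 | h2
      · exact absurd h2 hb
      · exact Subtype.ext h2
    · intro h
      have h2 : b ∈ G.neighborSet a := by
        rw [hm1 ⟨a, ha⟩]
        exact Or.inr (congrArg Subtype.val h)
      exact h2
  have Gcadj : ∀ v : V, v ≠ c → G.Adj c v := by
    intro v hv
    have h2 : c ∈ G.neighborSet v := by rw [hm1 ⟨v, hv⟩]; exact Or.inl rfl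
    exact h2.symm
  have FAdj : ∀ (x y : Fin n × Fin 2),
      (FriendshipGraph n).Adj (some x) (some y) ↔ (x ≠ y ∧ x.1 = y.1) := by
    rintro ⟨i, p⟩ ⟨j, q⟩
    rw [FriendshipGraph, SimpleGraph.fromRel_adj]
    constructor
    · rintro ⟨hne, h⟩
      refine ⟨fun he => hne (by rw [he]), ?_⟩
      rcases h with (h | ⟨i', p', q', h1, h2⟩) | (h | ⟨i', p', q', h1, h2⟩)
      · exact absurd h (by simp)
      · injection h1 with h1'
        injection h2 with h2'
        rw [show i = i' from congrArg Prod.fst h1', show j = i' from congrArg Prod.fst h2']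
      · exact absurd h (by simp)
      · injection h1 with h1'
        injection h2 with h2'
        rw [show i = i' from congrArg Prod.fst h2', show j = i' from congrArg Prod.fst h1']
    · rintro ⟨hne, h⟩
      refine ⟨fun h2 => hne (Option.some_injective _ h2), Or.inl (Or.inr ⟨i, p, q, rfl, ?_⟩)⟩
      have h' : i = j := h
      show (some (j, q) : Option (Fin n × Fin 2)) = some (i, q)
      rw [h']
  have FAdjnone : ∀ (x : Fin n × Fin 2), (FriendshipGraph n).Adj none (some x) := by
    intro x
    rw [FriendshipGraph, SimpleGraph.fromRel_adj]
    exact ⟨by simp, Or.inl (Or.inl rfl)⟩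
  refine ⟨n, hn, ⟨⟨E, ?_⟩⟩⟩
  intro a b
  show (FriendshipGraph n).Adj (E a) (E b) ↔ G.Adj a b
  by_cases ha : a = c <;> by_cases hb : b = c
  · subst ha; subst hb
    exact iff_of_false ((FriendshipGraph n).irrefl) (G.irrefl)
  · subst ha
    have hEa : E a = none := by simp [E]
    have hEb : E b = some (f ⟨b, hb⟩) := by simp only [E, Equiv.coe_fn_mk]; exact dif_neg hb
    rw [hEa, hEb]
    exact iff_of_true (FAdjnone _) (Gcadj b hb)
  · subst hb
    have hEb : E b = none := by simp [E]
    have hEa : E a = some (f ⟨a, ha⟩) := by simp only [E, Equiv.coe_fn_mk]; exact dif_neg ha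
    rw [hEa, hEb]
    exact iff_of_true ((FAdjnone _).symm) ((Gcadj a ha).symm)
  · have finj : Function.Injective f := Function.LeftInverse.injective gf
    have hEa : E a = some (f ⟨a, ha⟩) := by simp only [E, Equiv.coe_fn_mk]; exact dif_neg ha
    have hEb : E b = some (f ⟨b, hb⟩) := by simp only [E, Equiv.coe_fn_mk]; exact dif_neg hb
    rw [hEa, hEb, FAdj, Gadj a b ha hb, fadj]
    constructor
    · rintro ⟨hne2, hfst⟩
      exact ⟨hfst, fun h => hne2 (by rw [h])⟩
    · rintro ⟨hfst, hne2⟩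
      exact ⟨fun h => hne2 (finj h), hfst⟩

end AuxStmt14

/-- Every simple connected graph of minimum degree at least 2 which is
not a friendship graph has an edge whose deletion or simplified contraction is again
a simple connected graph of minimum degree at least 2. -/
theorem stmt_14 {V : Type} [Fintype V] (G : SimpleGraph V) (hG : InC2 G)
    (hnf : ¬ IsFriendship G) :
    ∃ a b : V, G.Adj a b ∧
      (InC2 (G.deleteEdges {s(a, b)}) ∨ InC2 (contractEdge G a b)) := by
  by_contra hcon
  push_neg at hcon
  apply hnf
  have P : ∀ a b, G.Adj a b → (∃ z, G.neighborSet z = {a, b}) ∨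
      (∃ z, G.neighborSet a = {b, z} ∧ G.neighborSet b = {a, z}) := by
    intro a b hab
    exact contract_fail hab hG (hcon a b hab).2
  obtain ⟨c, p, q, hpq, hp, hq⟩ := hub_exists hG P
  have hall := hub_all hG P hpq hp hq
  have hadj := hub_adj_all hG hall
  have hm : ∀ v : V, v ≠ c → ∃ w, w ≠ c ∧ w ≠ v ∧
      G.neighborSet v = {c, w} ∧ G.neighborSet w = {c, v} := by
    intro v hv
    rcases hadj v with h | h
    · exact absurd h hv
    obtain ⟨w, h1, h2⟩ := hall v h
    have hwc : G.Adj w c := by rw [← SimpleGraph.mem_neighborSet, h2]; exact Or.inl rfl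
    have hwv : G.Adj w v := by rw [← SimpleGraph.mem_neighborSet, h2]; exact Or.inr rfl
    exact ⟨w, hwc.ne, hwv.ne, h1, h2⟩
  have hpc : G.Adj p c := by rw [← SimpleGraph.mem_neighborSet, hp]; exact Or.inl rfl
  exact friendship_of_hub hG c ⟨p, hpc.ne⟩ hm
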